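/- arXiv:1003.5960 — 2 statements merged into one kernel-verified Lean document; each statement's English description precedes it below -/
import Mathlib

section
/- If z and w are nonzero complex numbers whose arguments both lie in the open interval (0, 2π/(k+1)), and e^{iα} z = e^{iβ} w where α and β are real numbers with (k+1)α ≡ (k+1)β (mod 2π), then α ≡ β (mod 2π) and z = w. -/
open Real

lemma exp_I_eq_iff (a b : ℝ) :
    Complex.exp (a * Complex.I) = Complex.exp (b * Complex.I) ↔
    ∃ n : ℤ, a = b + n * (2 * π) := by
  rw [Complex.exp_eq_exp_iff_exists_int]
  constructor
  · rintro ⟨n, h⟩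
    refine ⟨n, ?_⟩
    have h2 : (a : ℂ) * Complex.I = ((b : ℝ) + (n : ℝ) * (2 * π)) * Complex.I := by
      push_cast
      rw [h]; ring
    have := mul_right_cancel₀ Complex.I_ne_zero h2
    exact_mod_cast this
  · rintro ⟨n, h⟩
    refine ⟨n, ?_⟩
    rw [h]; push_cast; ring

/-- if `z, w` are nonzero complex numbers whose arguments lie in
`(0, 2π/(k+1))`, `e^{iα} z = e^{iβ} w`, and `(k+1)α ≡ (k+1)β (mod 2π)`, then
`α ≡ β (mod 2π)` and `z = w`. -/
theorem sector_rotation_injective (k : ℕ) (z w : ℂ) (α β : ℝ)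
    (hz : ∃ r φ : ℝ, 0 < r ∧ 0 < φ ∧ φ < 2 * π / (k + 1) ∧
      z = r * Complex.exp (φ * Complex.I))
    (hw : ∃ r φ : ℝ, 0 < r ∧ 0 < φ ∧ φ < 2 * π / (k + 1) ∧
      w = r * Complex.exp (φ * Complex.I))
    (heq : Complex.exp (α * Complex.I) * z = Complex.exp (β * Complex.I) * w)
    (hmod : Complex.exp (((k + 1 : ℝ) * α) * Complex.I)
          = Complex.exp (((k + 1 : ℝ) * β) * Complex.I)) :
    Complex.exp (α * Complex.I) = Complex.exp (β * Complex.I) ∧ z = w := by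
  obtain ⟨r, φ, hr, hφ0, hφ1, rfl⟩ := hz
  obtain ⟨s, ψ, hs, hψ0, hψ1, rfl⟩ := hw
  have hk1 : (0:ℝ) < (k:ℝ) + 1 := by positivity
  -- moduli
  have habs : r = s := by
    have h := congrArg (‖·‖) heq
    simpa [Complex.norm_exp, abs_of_pos hr, abs_of_pos hs] using h
  subst habs
  have hrC : (r : ℂ) ≠ 0 := by exact_mod_cast hr.ne'
  -- cancel r and combine exponentials
  have hphase : Complex.exp (((α + φ : ℝ) : ℂ) * Complex.I)
      = Complex.exp (((β + ψ : ℝ) : ℂ) * Complex.I) := by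
    have h1 : (r : ℂ) * Complex.exp (((α + φ : ℝ) : ℂ) * Complex.I)
        = (r : ℂ) * Complex.exp (((β + ψ : ℝ) : ℂ) * Complex.I) := by
      rw [show ((α + φ : ℝ) : ℂ) * Complex.I = α * Complex.I + φ * Complex.I by push_cast; ring,
        show ((β + ψ : ℝ) : ℂ) * Complex.I = β * Complex.I + ψ * Complex.I by push_cast; ring,
        Complex.exp_add, Complex.exp_add]
      rw [show (r : ℂ) * (Complex.exp (α * Complex.I) * Complex.exp (φ * Complex.I))
          = Complex.exp (α * Complex.I) * ((r:ℂ) * Complex.exp (φ * Complex.I)) by ring, heq]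
      ring
    exact mul_left_cancel₀ hrC h1
  obtain ⟨m, hm⟩ := (exp_I_eq_iff _ _).1 hphase
  have hmod' : Complex.exp (((((k:ℝ)+1)*α : ℝ)) * Complex.I)
      = Complex.exp (((((k:ℝ)+1)*β : ℝ)) * Complex.I) := by
    push_cast
    push_cast at hmod
    exact hmod
  obtain ⟨n, hn⟩ := (exp_I_eq_iff _ _).1 hmod'
  -- key: (k+1)(φ - ψ) = 2π * (m*(k+1) - n)
  have hkey : ((k:ℝ) + 1) * (φ - ψ) = 2 * π * ((m * (k + 1) - n : ℤ) : ℝ) := by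
    push_cast
    linear_combination ((k:ℝ) + 1) * hm - hn
  have hbound : |((k:ℝ) + 1) * (φ - ψ)| < 2 * π := by
    rw [abs_mul, abs_of_pos hk1]
    have h1 : φ - ψ < 2 * π / ((k:ℝ) + 1) := by linarith
    have h2 : -(2 * π / ((k:ℝ) + 1)) < φ - ψ := by linarith
    have : |φ - ψ| < 2 * π / ((k:ℝ) + 1) := abs_lt.2 ⟨h2, h1⟩
    calc ((k:ℝ) + 1) * |φ - ψ| < ((k:ℝ) + 1) * (2 * π / ((k:ℝ) + 1)) := by
          exact (mul_lt_mul_iff_right₀ hk1).2 this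
      _ = 2 * π := by field_simp
  have hN : (m * (k + 1) - n : ℤ) = 0 := by
    by_contra hne
    have h1 : (1:ℝ) ≤ |((m * (k + 1) - n : ℤ) : ℝ)| := by
      exact_mod_cast Int.one_le_abs hne
    rw [hkey, abs_mul, abs_of_pos (by positivity : (0:ℝ) < 2 * π)] at hbound
    nlinarith [Real.pi_pos]
  have hφψ : φ = ψ := by
    have : ((k:ℝ) + 1) * (φ - ψ) = 0 := by rw [hkey, hN]; simp
    have := mul_eq_zero.1 this
    rcases this with h | h
    · linarith
    · linarith
  subst hφψ
  have hαβ : α = β + m * (2 * π) := by linarith [hm]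
  exact ⟨(exp_I_eq_iff _ _).2 ⟨m, hαβ⟩, rfl⟩
end

section
/- Let Λ = ℤ₂[R^{±1}, T^{±1}, S₁^{±1}, S₂^{±1}] be the Laurent polynomial ring in four variables over 𝔽₂, and define D₁ = R + R⁻¹(T⁻¹S₁ + S₁ + S₂ + T S₂) and D₂ = R⁻¹(T⁻¹S₁ + T S₂). Then the ring homomorphism φ : Λ → ℤ₂[R^{±1}] determined by φ(R) = φ(T) = φ(S₂) = R and φ(S₁) = 1 sends the ideal (D₁, D₂) into the proper ideal (1 + R + R²) of ℤ₂[R^{±1}]; in particular 1 ∉ (D₁, D₂). -/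
namespace TwistTorusStmt6

/-- The Laurent polynomial ring `Λ = ℤ₂[R^{±1}, T^{±1}, S₁^{±1}, S₂^{±1}]`,
realized as the group algebra of `ℤ⁴` over `𝔽₂`. -/
abbrev Λ : Type := AddMonoidAlgebra (ZMod 2) (Fin 4 →₀ ℤ)

/-- The monomial with exponent vector `v`. -/
noncomputable def mono (v : Fin 4 →₀ ℤ) : Λ := AddMonoidAlgebra.single v 1

noncomputable def R : Λ := mono (Finsupp.single 0 1)
noncomputable def Rinv : Λ := mono (Finsupp.single 0 (-1))
noncomputable def Tv : Λ := mono (Finsupp.single 1 1)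
noncomputable def Tinv : Λ := mono (Finsupp.single 1 (-1))
noncomputable def S₁ : Λ := mono (Finsupp.single 2 1)
noncomputable def S₂ : Λ := mono (Finsupp.single 3 1)

/-- `D₁ = d₂Γ* = R + R⁻¹(T⁻¹S₁ + S₁ + S₂ + T S₂)`. -/
noncomputable def D₁ : Λ := R + Rinv * (Tinv * S₁ + S₁ + S₂ + Tv * S₂)

/-- `D₂ = d₂τ* = R⁻¹(T⁻¹S₁ + T S₂)`. -/
noncomputable def D₂ : Λ := Rinv * (Tinv * S₁ + Tv * S₂)

open LaurentPolynomial

noncomputable def f : (Fin 4 →₀ ℤ) →+ ℤ :=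
  Finsupp.applyAddHom 0 + Finsupp.applyAddHom 1 + Finsupp.applyAddHom 3

noncomputable def φ : Λ →+* LaurentPolynomial (ZMod 2) :=
  AddMonoidAlgebra.mapDomainRingHom (ZMod 2) f

open LaurentPolynomial

theorem φ_mono (v : Fin 4 →₀ ℤ) : φ (mono v) = T (f v) := by
  show AddMonoidAlgebra.mapDomain f (AddMonoidAlgebra.single v 1) = T (f v)
  rw [AddMonoidAlgebra.mapDomain_single, LaurentPolynomial.T]

theorem φR : φ R = T 1 := by
  rw [R, φ_mono, show f (Finsupp.single 0 1) = 1 from by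
    simp only [f, AddMonoidHom.add_apply, Finsupp.applyAddHom_apply, Finsupp.single_apply]
    decide]
theorem φRinv : φ Rinv = T (-1) := by
  rw [Rinv, φ_mono, show f (Finsupp.single 0 (-1)) = -1 from by
    simp only [f, AddMonoidHom.add_apply, Finsupp.applyAddHom_apply, Finsupp.single_apply]
    decide]
theorem φTv : φ Tv = T 1 := by
  rw [Tv, φ_mono, show f (Finsupp.single 1 1) = 1 from by
    simp only [f, AddMonoidHom.add_apply, Finsupp.applyAddHom_apply, Finsupp.single_apply]
    decide]
theorem φTinv : φ Tinv = T (-1) := by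
  rw [Tinv, φ_mono, show f (Finsupp.single 1 (-1)) = -1 from by
    simp only [f, AddMonoidHom.add_apply, Finsupp.applyAddHom_apply, Finsupp.single_apply]
    decide]
theorem φS₁ : φ S₁ = 1 := by
  rw [S₁, φ_mono, show f (Finsupp.single 2 1) = 0 from by
    simp only [f, AddMonoidHom.add_apply, Finsupp.applyAddHom_apply, Finsupp.single_apply]
    decide, T_zero]
theorem φS₂ : φ S₂ = T 1 := by
  rw [S₂, φ_mono, show f (Finsupp.single 3 1) = 1 from by
    simp only [f, AddMonoidHom.add_apply, Finsupp.applyAddHom_apply, Finsupp.single_apply]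
    decide]

theorem two_eq_zero : (2 : LaurentPolynomial (ZMod 2)) = 0 := by
  have h := map_ofNat (LaurentPolynomial.C (R := ZMod 2)) 2
  rw [show ((2:ZMod 2)) = 0 from by decide, map_zero] at h
  exact h.symm

theorem hab : (T 1 : LaurentPolynomial (ZMod 2)) * T (-1) = 1 := by
  rw [← T_add]; norm_num

theorem e2 : (T 2 : LaurentPolynomial (ZMod 2)) = T 1 * T 1 := by
  rw [← T_add]; norm_num

theorem em2 : (T (-2) : LaurentPolynomial (ZMod 2)) = T (-1) * T (-1) := by
  rw [← T_add]; norm_num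

theorem φD₁ : φ D₁ = T (-2) * (1 + T 1 + T 2) := by
  rw [D₁]
  simp only [map_add, map_mul, φR, φRinv, φTv, φTinv, φS₁, φS₂, mul_one]
  rw [e2, em2]
  linear_combination (T 1 - T (-1) - T 1 * T (-1) : LaurentPolynomial (ZMod 2)) * hab
    + (T 1 : LaurentPolynomial (ZMod 2)) * two_eq_zero

theorem φD₂ : φ D₂ = (T (-2) + T (-1)) * (1 + T 1 + T 2) := by
  rw [D₂]
  simp only [map_add, map_mul, φRinv, φTv, φTinv, φS₁, φS₂, mul_one]
  rw [e2, em2]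
  linear_combination (-T (-1) - T 1 * T (-1) - 2 : LaurentPolynomial (ZMod 2)) * hab
    + (-T (-1) - 1 : LaurentPolynomial (ZMod 2)) * two_eq_zero

-- the quotient argument
noncomputable def q : Polynomial (ZMod 2) := Polynomial.X ^ 2 + Polynomial.X + 1

instance : Nontrivial (AdjoinRoot q) := AdjoinRoot.nontrivial q (by
  have : (q).degree = 2 := by unfold q; compute_degree!
  simp [this])

noncomputable def ω : AdjoinRoot q := AdjoinRoot.root q

theorem h2K : (2 : AdjoinRoot q) = 0 := by
  have h := map_ofNat (algebraMap (ZMod 2) (AdjoinRoot q)) 2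
  rw [show ((2:ZMod 2)) = 0 from by decide, map_zero] at h
  exact h.symm

theorem ω_rel : ω ^ 2 + ω + 1 = 0 := by
  have : Polynomial.eval₂ (AdjoinRoot.of q) ω (Polynomial.X ^ 2 + Polynomial.X + 1) = 0 :=
    AdjoinRoot.eval₂_root q
  simpa [Polynomial.eval₂_add, Polynomial.eval₂_pow, Polynomial.eval₂_X, Polynomial.eval₂_one] using this

theorem ω_inv : ω * (ω + 1) = 1 := by
  linear_combination ω_rel - h2K

noncomputable def u : (AdjoinRoot q)ˣ :=
  ⟨ω, ω + 1, ω_inv, by rw [mul_comm]; exact ω_inv⟩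

noncomputable def ψ : LaurentPolynomial (ZMod 2) →+* AdjoinRoot q :=
  ((AddMonoidAlgebra.lift (ZMod 2) (AdjoinRoot q) ℤ)
    ((Units.coeHom _).comp (zpowersHom _ u))).toRingHom

theorem ψT (n : ℤ) : ψ (T n) = ((u ^ n : (AdjoinRoot q)ˣ) : AdjoinRoot q) := by
  show (AddMonoidAlgebra.lift (ZMod 2) (AdjoinRoot q) ℤ) _ (AddMonoidAlgebra.single n 1)
      = ((u ^ n : (AdjoinRoot q)ˣ) : AdjoinRoot q)
  rw [AddMonoidAlgebra.lift_single]
  simp [zpowersHom]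

theorem ψg : ψ (1 + T 1 + T 2) = 0 := by
  rw [map_add, map_add, map_one, ψT, ψT]
  have h1 : ((u ^ (1:ℤ) : (AdjoinRoot q)ˣ) : AdjoinRoot q) = ω := by simp [u]
  have h2 : ((u ^ (2:ℤ) : (AdjoinRoot q)ˣ) : AdjoinRoot q) = ω ^ 2 := by
    rw [show (2:ℤ) = ((2:ℕ):ℤ) by norm_num, zpow_natCast, Units.val_pow_eq_pow_val]; rfl
  rw [h1, h2]
  linear_combination ω_rel

theorem one_not_mem : (1 : LaurentPolynomial (ZMod 2)) ∉
    Ideal.span ({1 + T 1 + T 2} : Set (LaurentPolynomial (ZMod 2))) := by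
  intro h
  rw [Ideal.mem_span_singleton'] at h
  obtain ⟨c, hc⟩ := h
  have : (1 : AdjoinRoot q) = 0 := by
    calc (1 : AdjoinRoot q) = ψ 1 := (map_one ψ).symm
    _ = ψ c * ψ (1 + T 1 + T 2) := by rw [← map_mul, hc]
    _ = 0 := by rw [ψg, mul_zero]
  exact one_ne_zero this

theorem maps_ideal :
    ∀ x ∈ Ideal.span ({D₁, D₂} : Set Λ),
      φ x ∈ Ideal.span ({1 + T 1 + T 2} : Set (LaurentPolynomial (ZMod 2))) := by
  intro x hx
  have hle : Ideal.span ({D₁, D₂} : Set Λ) ≤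
      Ideal.comap φ (Ideal.span ({1 + T 1 + T 2} : Set (LaurentPolynomial (ZMod 2)))) := by
    rw [Ideal.span_le]
    rintro y hy
    simp only [Set.mem_insert_iff, Set.mem_singleton_iff] at hy
    rcases hy with rfl | rfl
    · exact Ideal.mem_span_singleton.mpr ⟨T (-2), by rw [φD₁]; ring⟩
    · exact Ideal.mem_span_singleton.mpr ⟨T (-2) + T (-1), by rw [φD₂]; ring⟩
  exact hle hx


open LaurentPolynomial in
/-- the ring homomorphism `φ : Λ → ℤ₂[R^{±1}]` with
`φ(R) = φ(T) = φ(S₂) = R`, `φ(S₁) = 1` sends the ideal `(D₁, D₂)` into the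
proper ideal `(1 + R + R²)`; in particular `1 ∉ (D₁, D₂)`. -/
theorem pearl_differential_image_proper :
    ∃ φ : Λ →+* LaurentPolynomial (ZMod 2),
      φ R = T 1 ∧ φ Tv = T 1 ∧ φ S₂ = T 1 ∧ φ S₁ = 1 ∧
      (∀ x ∈ Ideal.span ({D₁, D₂} : Set Λ),
        φ x ∈ Ideal.span ({1 + T 1 + T 2} : Set (LaurentPolynomial (ZMod 2)))) ∧
      (1 : LaurentPolynomial (ZMod 2)) ∉
        Ideal.span ({1 + T 1 + T 2} : Set (LaurentPolynomial (ZMod 2))) ∧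
      (1 : Λ) ∉ Ideal.span ({D₁, D₂} : Set Λ) := by
  refine ⟨φ, φR, φTv, φS₂, φS₁, maps_ideal, one_not_mem, ?_⟩
  intro h
  have h1 := maps_ideal 1 h
  rw [map_one] at h1
  exact one_not_mem h1

end TwistTorusStmt6
end
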